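/- Let M be a symmetric positive semidefinite d×d real matrix with block structure indexed by a partition (A,B,C) of {1,...,d} such that the block M_{A,C} is zero. Then for any symmetric matrix N indexed by B×B, there exists a symmetric matrix S indexed by B×B such that both block matrices [[M_{A,A}, M_{A,B}],[M_{A,B}^T, N−S]] and [[M_{B,B}−N+S, M_{B,C}],[M_{B,C}^T, M_{C,C}]] are positive semidefinite. -/

import Mathlib

open Matrix

variable {n : Type*} [Fintype n] [DecidableEq n]

lemma exists_pinv (H : Matrix n n ℝ) (hH : H.PosSemidef) :
    ∃ K : Matrix n n ℝ, K.IsHermitian ∧ K.PosSemidef ∧ H * K * H = H ∧ H * K = K * H ∧ K * H * K = K := by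
  have hherm := hH.1
  set U : Matrix n n ℝ := (hherm.eigenvectorUnitary : Matrix n n ℝ) with hUdef
  set D : Matrix n n ℝ := Matrix.diagonal (RCLike.ofReal ∘ hherm.eigenvalues) with hDdef
  set D' : Matrix n n ℝ := Matrix.diagonal (fun i => (hherm.eigenvalues i)⁻¹) with hD'def
  have hU2 : star U * U = 1 := (Matrix.mem_unitaryGroup_iff').mp hherm.eigenvectorUnitary.2
  have hU2' : ∀ Z : Matrix n n ℝ, star U * (U * Z) = Z := fun Z => by
    rw [← mul_assoc, hU2, one_mul]
  have key : ∀ X Y : Matrix n n ℝ, (U * X * star U) * (U * Y * star U) = U * (X * Y) * star U := by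
    intro X Y
    simp only [mul_assoc, hU2']
  have hspec : H = U * D * star U := hherm.spectral_theorem
  have hDD'D : D * D' * D = D := by
    rw [hDdef, hD'def, Matrix.diagonal_mul_diagonal, Matrix.diagonal_mul_diagonal]
    congr 1
    funext i
    simp [RCLike.ofReal]
  have hDD' : D * D' = D' * D := by
    rw [hDdef, hD'def, Matrix.diagonal_mul_diagonal, Matrix.diagonal_mul_diagonal]
    congr 1; funext i; simp [mul_comm]
  refine ⟨U * D' * star U, ?_, ?_, ?_, ?_, ?_⟩
  · have hD'T : D'ᵀ = D' := by rw [hD'def]; exact Matrix.diagonal_transpose _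
    unfold Matrix.IsHermitian
    simp [Matrix.conjTranspose_mul, mul_assoc, Matrix.star_eq_conjTranspose,
      Matrix.conjTranspose_conjTranspose, hD'T]
  · have h1 : D'.PosSemidef := Matrix.posSemidef_diagonal_iff.mpr
      (fun i => inv_nonneg.mpr (hH.eigenvalues_nonneg i))
    have := h1.mul_mul_conjTranspose_same U
    rwa [Matrix.star_eq_conjTranspose] at *
  · rw [hspec, key, key, hDD'D, ← hspec]
  · rw [hspec, key, key, hDD']
  · have hD'DD' : D' * D * D' = D' := by
      rw [hDdef, hD'def, Matrix.diagonal_mul_diagonal, Matrix.diagonal_mul_diagonal]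
      have hfun : (fun i => (hherm.eigenvalues i)⁻¹ * (RCLike.ofReal ∘ hherm.eigenvalues) i
          * (hherm.eigenvalues i)⁻¹) = fun i => (hherm.eigenvalues i)⁻¹ := by
        funext i
        rcases eq_or_ne (hherm.eigenvalues i) 0 with h | h
        · simp [h]
        · field_simp; rfl
      rw [hfun]
    rw [hspec, key, key, hD'DD']


open Matrix

section helpers

variable {ι κ α β γ : Type*}

lemma dotmv [Fintype α] [Fintype κ] (A : Matrix α κ ℝ) (y : α → ℝ) (z : κ → ℝ) :
    y ⬝ᵥ (A *ᵥ z) = (Aᵀ *ᵥ y) ⬝ᵥ z := by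
  rw [Matrix.dotProduct_mulVec]
  congr 1
  rw [← Matrix.vecMul_transpose, Matrix.transpose_transpose]

lemma quad_coef (a b : ℝ) (ha : 0 ≤ a) (h : ∀ t : ℝ, 0 ≤ a * t ^ 2 + 2 * b * t) : b = 0 := by
  have hpos : (0:ℝ) < a + 1 := by linarith
  have h1 := h (-(b / (a + 1)))
  have h2 : a * (b / (a+1))^2 ≤ (a+1) * (b/(a+1))^2 := by nlinarith [sq_nonneg (b/(a+1))]
  have h3 : (a+1) * (b/(a+1))^2 = b^2 / (a+1) := by field_simp
  have h4 : 2 * b * -(b/(a+1)) = -(2 * (b^2/(a+1))) := by ring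
  have h5 : b^2/(a+1) ≤ 0 := by nlinarith
  have heq : b^2 = b^2/(a+1)*(a+1) := by field_simp
  have h6 : b^2 ≤ 0 := by nlinarith [mul_nonneg (neg_nonneg.mpr h5) hpos.le]
  have hb2 : b^2 = 0 := le_antisymm h6 (sq_nonneg b)
  exact pow_eq_zero_iff (two_ne_zero) |>.mp hb2

lemma quadForm_fromBlocks [Fintype α] [Fintype β] (P : Matrix α α ℝ) (Q : Matrix α β ℝ)
    (Q' : Matrix β α ℝ) (R : Matrix β β ℝ) (x : α → ℝ) (z : β → ℝ) :
    Sum.elim x z ⬝ᵥ (Matrix.fromBlocks P Q Q' R *ᵥ Sum.elim x z)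
      = x ⬝ᵥ (P *ᵥ x) + x ⬝ᵥ (Q *ᵥ z) + z ⬝ᵥ (Q' *ᵥ x) + z ⬝ᵥ (R *ᵥ z) := by
  rw [Matrix.fromBlocks_mulVec, sumElim_dotProduct_sumElim]
  simp [dotProduct_add]
  ring

lemma submatrix_row_elim [Fintype κ] (M : Matrix ι ι ℝ) (f : α → ι) (g : β → ι) (r : κ → ι)
    (u : κ → ℝ) :
    M.submatrix (Sum.elim f g) r *ᵥ u
      = Sum.elim (M.submatrix f r *ᵥ u) (M.submatrix g r *ᵥ u) := by
  funext i; cases i <;> rfl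

lemma submatrix_col_elim [Fintype α] [Fintype β] (M : Matrix ι ι ℝ) (r : κ → ι) (f : α → ι)
    (g : β → ι) (u : α → ℝ) (v : β → ℝ) :
    M.submatrix r (Sum.elim f g) *ᵥ Sum.elim u v
      = M.submatrix r f *ᵥ u + M.submatrix r g *ᵥ v := by
  funext i
  simp [Matrix.mulVec, dotProduct, Fintype.sum_sum_type]

lemma submatrix_elim_fromBlocks [Fintype ι] (M : Matrix ι ι ℝ) (f : α → ι) (g : β → ι) :
    M.submatrix (Sum.elim f g) (Sum.elim f g)
      = Matrix.fromBlocks (M.submatrix f f) (M.submatrix f g) (M.submatrix g f)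
          (M.submatrix g g) := by
  ext i j; cases i <;> cases j <;> rfl

lemma quad3 [Fintype ι] [Fintype α] [Fintype β] [Fintype γ] (M : Matrix ι ι ℝ)
    (hM : M.PosSemidef) (f : α → ι) (g : β → ι) (h : γ → ι) (x : α → ℝ) (y : β → ℝ)
    (z : γ → ℝ) :
    0 ≤ x ⬝ᵥ (M.submatrix f f *ᵥ x) + x ⬝ᵥ (M.submatrix f g *ᵥ y) + x ⬝ᵥ (M.submatrix f h *ᵥ z)
      + y ⬝ᵥ (M.submatrix g f *ᵥ x) + y ⬝ᵥ (M.submatrix g g *ᵥ y) + y ⬝ᵥ (M.submatrix g h *ᵥ z)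
      + z ⬝ᵥ (M.submatrix h f *ᵥ x) + z ⬝ᵥ (M.submatrix h g *ᵥ y)
      + z ⬝ᵥ (M.submatrix h h *ᵥ z) := by
  have key := (hM.submatrix (Sum.elim (Sum.elim f g) h)).dotProduct_mulVec_nonneg (Sum.elim (Sum.elim x y) z)
  simp only [RCLike.star_def, star_trivial] at key
  rw [show (Sum.elim (Sum.elim f g) h) = (Sum.elim (Sum.elim f g) h) from rfl] at key
  simp only [submatrix_col_elim, submatrix_row_elim, sumElim_dotProduct_sumElim,
    dotProduct_add, Sum.elim_inl, Sum.elim_inr, Pi.add_apply] at key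
  have : ∀ a b c d : γ → ℝ, True := fun _ _ _ _ => trivial
  linarith [key]

lemma psd_row_kernel [Fintype α] [Fintype β] (P : Matrix α α ℝ) (Q : Matrix α β ℝ)
    (R : Matrix β β ℝ) (h : (Matrix.fromBlocks P Q Qᵀ R).PosSemidef) (z : β → ℝ)
    (hz : R *ᵥ z = 0) : Q *ᵥ z = 0 := by
  set w : α → ℝ := Q *ᵥ z with hw
  have ha : 0 ≤ w ⬝ᵥ (P *ᵥ w) := by
    have := h.dotProduct_mulVec_nonneg (Sum.elim w 0)
    simp only [RCLike.star_def, star_trivial] at this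
    rw [quadForm_fromBlocks] at this
    simpa using this
  have hquad : ∀ t : ℝ, 0 ≤ (w ⬝ᵥ (P *ᵥ w)) * t ^ 2 + 2 * (w ⬝ᵥ w) * t := by
    intro t
    have := h.dotProduct_mulVec_nonneg (Sum.elim (t • w) z)
    simp only [RCLike.star_def, star_trivial] at this
    rw [quadForm_fromBlocks] at this
    have e1 : (t • w) ⬝ᵥ (P *ᵥ (t • w)) = (w ⬝ᵥ (P *ᵥ w)) * t ^ 2 := by
      rw [Matrix.mulVec_smul, dotProduct_smul, smul_dotProduct]; ring_nf
    have e2 : (t • w) ⬝ᵥ (Q *ᵥ z) = t * (w ⬝ᵥ w) := by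
      rw [← hw, smul_dotProduct]; simp [smul_eq_mul]
    have e3 : z ⬝ᵥ (Qᵀ *ᵥ (t • w)) = t * (w ⬝ᵥ w) := by
      rw [dotmv, Matrix.transpose_transpose, ← hw, dotProduct_smul]
      simp [smul_eq_mul, dotProduct_comm]
    have e4 : z ⬝ᵥ (R *ᵥ z) = 0 := by rw [hz]; simp
    rw [e1, e2, e3, e4] at this
    linarith
  have hb : w ⬝ᵥ w = 0 := quad_coef _ _ ha hquad
  exact dotProduct_self_eq_zero.mp hb

lemma matrix_eq_of_mulVec [Fintype β] [DecidableEq β] (M1 M2 : Matrix α β ℝ)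
    (h : ∀ z, M1 *ᵥ z = M2 *ᵥ z) : M1 = M2 := by
  ext i j
  have := congrFun (h (Pi.single j 1)) i
  simpa [Matrix.mulVec_single] using this

lemma isHermitian_fromBlocks_real [Fintype α] [Fintype β] (P : Matrix α α ℝ) (Q : Matrix α β ℝ)
    (R : Matrix β β ℝ) (hP : Pᵀ = P) (hR : Rᵀ = R) :
    (Matrix.fromBlocks P Q Qᵀ R).IsHermitian := by
  have h1 : (Matrix.fromBlocks P Q Qᵀ R)ᴴ = (Matrix.fromBlocks P Q Qᵀ R)ᵀ := by
    ext i j; simp [Matrix.conjTranspose_apply, Matrix.transpose_apply]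
  unfold Matrix.IsHermitian
  rw [h1, Matrix.fromBlocks_transpose, hP, hR, Matrix.transpose_transpose]

end helpers


theorem exists_separation_matrix {d : ℕ} (M : Matrix (Fin d) (Fin d) ℝ)
    (A B C : Finset (Fin d))
    (hAB : Disjoint A B) (hAC : Disjoint A C) (hBC : Disjoint B C)
    (hU : A ∪ B ∪ C = Finset.univ)
    (hM : M.PosSemidef)
    (hzero : ∀ i ∈ A, ∀ j ∈ C, M i j = 0)
    (N : Matrix {x // x ∈ B} {x // x ∈ B} ℝ) (hN : N.IsSymm) :
    ∃ S : Matrix {x // x ∈ B} {x // x ∈ B} ℝ, S.IsSymm ∧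
      (Matrix.fromBlocks
        (M.submatrix (Subtype.val : {x // x ∈ A} → Fin d) (Subtype.val : {x // x ∈ A} → Fin d))
        (M.submatrix (Subtype.val : {x // x ∈ A} → Fin d) (Subtype.val : {x // x ∈ B} → Fin d))
        (M.submatrix (Subtype.val : {x // x ∈ A} → Fin d) (Subtype.val : {x // x ∈ B} → Fin d)).transpose
        (N - S)).PosSemidef ∧
      (Matrix.fromBlocks
        (M.submatrix (Subtype.val : {x // x ∈ B} → Fin d) (Subtype.val : {x // x ∈ B} → Fin d)
          - N + S)
        (M.submatrix (Subtype.val : {x // x ∈ B} → Fin d) (Subtype.val : {x // x ∈ C} → Fin d))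
        (M.submatrix (Subtype.val : {x // x ∈ B} → Fin d) (Subtype.val : {x // x ∈ C} → Fin d)).transpose
        (M.submatrix (Subtype.val : {x // x ∈ C} → Fin d) (Subtype.val : {x // x ∈ C} → Fin d))
        ).PosSemidef := by
  classical
  set fA := (Subtype.val : {x // x ∈ A} → Fin d) with hfA
  set fB := (Subtype.val : {x // x ∈ B} → Fin d) with hfB
  set fC := (Subtype.val : {x // x ∈ C} → Fin d) with hfC
  have hMT : Mᵀ = M := by
    ext i j
    have := congrFun (congrFun hM.1 i) j
    simpa [Matrix.conjTranspose_apply] using this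
  set AA := M.submatrix fA fA with hAAd
  set AB := M.submatrix fA fB with hABd
  set BB := M.submatrix fB fB with hBBd
  set BC := M.submatrix fB fC with hBCd
  set CB := M.submatrix fC fB with hCBd
  set CC := M.submatrix fC fC with hCCd
  have tsub : ∀ {κ₁ κ₂ : Type} (f : κ₁ → Fin d) (g : κ₂ → Fin d),
      (M.submatrix f g)ᵀ = M.submatrix g f := by
    intro κ₁ κ₂ f g
    rw [Matrix.transpose_submatrix, hMT]
  have hBAeq : ABᵀ = M.submatrix fB fA := tsub fA fB
  have hCBeq : BCᵀ = CB := tsub fB fC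
  have hBCeq : CBᵀ = BC := tsub fC fB
  have hBBT : BBᵀ = BB := tsub fB fB
  have hAAT : AAᵀ = AA := tsub fA fA
  have hCCT : CCᵀ = CC := tsub fC fC
  have hCC : CC.PosSemidef := hM.submatrix fC
  obtain ⟨K, hKh, hKpsd, hHKH, hHK, hKHK⟩ := exists_pinv CC hCC
  have hKT : Kᵀ = K := by
    have h0 := hKh
    unfold Matrix.IsHermitian at h0
    ext i j
    have h2 := congrFun (congrFun h0 i) j
    simpa [Matrix.conjTranspose_apply] using h2
  have hbig2 : (Matrix.fromBlocks BB BC BCᵀ CC).PosSemidef := by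
    have h0 := hM.submatrix (Sum.elim fB fC)
    rw [submatrix_elim_fromBlocks] at h0
    rwa [hCBeq]
  have habsorb : BC * K * CC = BC := by
    apply matrix_eq_of_mulVec
    intro z
    have hker : CC *ᵥ (z - (K * CC) *ᵥ z) = 0 := by
      rw [Matrix.mulVec_sub, Matrix.mulVec_mulVec, ← Matrix.mul_assoc, hHKH, sub_self]
    have h0 := psd_row_kernel BB BC CC hbig2 _ hker
    rw [Matrix.mulVec_sub, Matrix.mulVec_mulVec, sub_eq_zero] at h0
    rw [Matrix.mul_assoc]
    exact h0.symm
  have habsorb2 : CC * K * CB = CB := by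
    have h0 := congrArg Matrix.transpose habsorb
    simp only [Matrix.transpose_mul, hKT, hCCT, hCBeq, ← Matrix.mul_assoc] at h0
    exact h0
  have hAC0 : M.submatrix fA fC = 0 := by
    ext i j
    exact hzero i.1 i.2 j.1 j.2
  have hCA0 : M.submatrix fC fA = 0 := by
    rw [← tsub fA fC, hAC0]
    simp
  set T := BC * K * CB with hTd
  set S := T - BB + N with hSd
  have hTT : Tᵀ = T := by
    rw [hTd, Matrix.transpose_mul, Matrix.transpose_mul, hKT, hBCeq, hCBeq, ← Matrix.mul_assoc]
  have hNT : Nᵀ = N := hN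
  have hST : S.IsSymm := by
    unfold Matrix.IsSymm
    rw [hSd, Matrix.transpose_add, Matrix.transpose_sub, hTT, hBBT, hNT]
  have hNS : N - S = BB - T := by rw [hSd]; abel
  have hBNS : BB - N + S = T := by rw [hSd]; abel
  -- key scalar identities
  have eK : ∀ u : {x // x ∈ C} → ℝ, (K *ᵥ u) ⬝ᵥ (CC *ᵥ (K *ᵥ u)) = u ⬝ᵥ (K *ᵥ u) := by
    intro u
    rw [Matrix.mulVec_mulVec, dotmv, Matrix.transpose_mul, hKT, hCCT,
      Matrix.mulVec_mulVec, hKHK, dotProduct_comm]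
  have eT : ∀ y : {x // x ∈ B} → ℝ,
      y ⬝ᵥ (T *ᵥ y) = (CB *ᵥ y) ⬝ᵥ (K *ᵥ (CB *ᵥ y)) := by
    intro y
    have h1 : T *ᵥ y = BC *ᵥ (K *ᵥ (CB *ᵥ y)) := by
      rw [Matrix.mulVec_mulVec, Matrix.mulVec_mulVec, hTd]
    rw [h1, dotmv, hCBeq]
  have eabs : ∀ u : {x // x ∈ B} → ℝ, CC *ᵥ (K *ᵥ (CB *ᵥ u)) = CB *ᵥ u := by
    intro u
    rw [Matrix.mulVec_mulVec, Matrix.mulVec_mulVec, habsorb2]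
  refine ⟨S, hST, PosSemidef.of_dotProduct_mulVec_nonneg ?_ ?_,
    PosSemidef.of_dotProduct_mulVec_nonneg ?_ ?_⟩
  · rw [hNS]
    exact isHermitian_fromBlocks_real AA AB (BB - T) hAAT
      (by rw [Matrix.transpose_sub, hBBT, hTT])
  · rw [hNS]
    intro v
    set x := v ∘ Sum.inl with hx
    set y := v ∘ Sum.inr with hy
    have hv : v = Sum.elim x y := (Sum.elim_comp_inl_inr v).symm
    rw [hv, star_trivial, quadForm_fromBlocks]
    set w := CB *ᵥ y with hw
    set z := -(K *ᵥ w) with hz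
    have hq3 := quad3 M hM fA fB fC x y z
    rw [← hAAd, ← hABd, ← hBBd, ← hBCd, ← hCBd, ← hCCd, hAC0, hCA0, ← hBAeq] at hq3
    have e1 : y ⬝ᵥ (BC *ᵥ z) = -(y ⬝ᵥ (T *ᵥ y)) := by
      rw [hz, Matrix.mulVec_neg, dotProduct_neg, eT, neg_inj,
        Matrix.mulVec_mulVec, ← hw]
      rw [dotmv, Matrix.transpose_mul, hKT, hCBeq, ← Matrix.mulVec_mulVec, ← hw,
        dotProduct_comm]
    have e2 : z ⬝ᵥ (CB *ᵥ y) = -(y ⬝ᵥ (T *ᵥ y)) := by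
      rw [hz, ← hw, neg_dotProduct, eT, neg_inj, dotProduct_comm]
    have e3 : z ⬝ᵥ (CC *ᵥ z) = y ⬝ᵥ (T *ᵥ y) := by
      rw [hz, Matrix.mulVec_neg, neg_dotProduct, dotProduct_neg, neg_neg,
        eK w, eT, ← hw]
    rw [e1, e2, e3] at hq3
    simp only [Matrix.zero_mulVec, dotProduct_zero] at hq3
    have egoal : y ⬝ᵥ ((BB - T) *ᵥ y) = y ⬝ᵥ (BB *ᵥ y) - y ⬝ᵥ (T *ᵥ y) := by
      rw [Matrix.sub_mulVec, dotProduct_sub]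
    rw [egoal]
    linarith [hq3]
  · rw [hBNS]
    exact isHermitian_fromBlocks_real T BC CC hTT hCCT
  · rw [hBNS]
    intro v
    set y := v ∘ Sum.inl with hy
    set z := v ∘ Sum.inr with hz
    have hv : v = Sum.elim y z := (Sum.elim_comp_inl_inr v).symm
    rw [hv, star_trivial, quadForm_fromBlocks]
    set w := CB *ᵥ y with hw
    have base := hCC.dotProduct_mulVec_nonneg (z + K *ᵥ w)
    rw [star_trivial, Matrix.mulVec_add, dotProduct_add, add_dotProduct,
      add_dotProduct] at base
    have f1 : z ⬝ᵥ (CC *ᵥ (K *ᵥ w)) = z ⬝ᵥ (BCᵀ *ᵥ y) := by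
      rw [hw, eabs, hCBeq]
    have f2 : (K *ᵥ w) ⬝ᵥ (CC *ᵥ z) = y ⬝ᵥ (BC *ᵥ z) := by
      rw [dotmv, hCCT, hw, eabs, ← hw]
      rw [dotmv BC y z, hCBeq, hw]
    have f3 : (K *ᵥ w) ⬝ᵥ (CC *ᵥ (K *ᵥ w)) = y ⬝ᵥ (T *ᵥ y) := by
      rw [eK, eT, ← hw]
    rw [f1, f2, f3] at base
    linarith [base]
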